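/- arXiv:2104.10372 — 2 statements merged into one kernel-verified Lean document; each statement's English description precedes it below -/
import Mathlib

section
/- Let N ≥ 1, b ∈ ℝ, t ∈ ℝ, and suppose u : ℝ^N\{0} → ℝ is C¹, not identically zero, and satisfies the ODE along rays (x/|x|)·∇u(x) = −t u(x)/|x| for all x ≠ 0 (the case a = b+1 of the minimizer equation). Then u(x) = α(x/|x|) |x|^{−t} for some function α on the unit sphere, and if t = (N−2b−2)/2 with N ≠ 2b+2, then ∫_{ℝ^N} |u(x)|²/|x|^{2(b+1)} dx = +∞. -/
open MeasureTheory Real Filter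
open scoped Topology Pointwise

theorem stmt_13 (N : ℕ) (hN : 1 ≤ N) (b t : ℝ)
    (u : EuclideanSpace ℝ (Fin N) → ℝ)
    (hu : ContDiffOn ℝ 1 u {x : EuclideanSpace ℝ (Fin N) | x ≠ 0})
    (hne : ∃ x : EuclideanSpace ℝ (Fin N), x ≠ 0 ∧ u x ≠ 0)
    (hode : ∀ x : EuclideanSpace ℝ (Fin N), x ≠ 0 →
      (inner ℝ (‖x‖⁻¹ • x) (gradient u x) : ℝ) = -t * u x / ‖x‖) :
    (∃ α : EuclideanSpace ℝ (Fin N) → ℝ,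
      ∀ x : EuclideanSpace ℝ (Fin N), x ≠ 0 → u x = α (‖x‖⁻¹ • x) * ‖x‖ ^ (-t))
    ∧ (t = ((N : ℝ) - 2 * b - 2) / 2 → (N : ℝ) ≠ 2 * b + 2 →
      ∫⁻ x : EuclideanSpace ℝ (Fin N),
        ENNReal.ofReal ((u x) ^ 2 / ‖x‖ ^ (2 * (b + 1))) = ⊤) := by
  classical
  have hopen : IsOpen {x : EuclideanSpace ℝ (Fin N) | x ≠ 0} := isOpen_ne
  have hdiff : ∀ x : EuclideanSpace ℝ (Fin N), x ≠ 0 → DifferentiableAt ℝ u x := fun x hx =>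
    (hu.differentiableOn one_ne_zero).differentiableAt (hopen.mem_nhds hx)
  -- derivative along rays
  have hderiv_ray : ∀ (ω : EuclideanSpace ℝ (Fin N)), ‖ω‖ = 1 → ∀ r : ℝ, 0 < r →
      HasDerivAt (fun s : ℝ => u (s • ω)) (-t * u (r • ω) / r) r := by
    intro ω hω r hr
    have hωne : ω ≠ 0 := by
      intro h; rw [h, norm_zero] at hω; norm_num at hω
    have hne' : r • ω ≠ 0 := smul_ne_zero hr.ne' hωne
    have hF : HasFDerivAt u (fderiv ℝ u (r • ω)) (r • ω) := (hdiff _ hne').hasFDerivAt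
    have hsm : HasDerivAt (fun s : ℝ => s • ω) ω r := by
      simpa using (hasDerivAt_id r).smul_const ω
    have h1 := hF.comp_hasDerivAt r hsm
    have hnorm : ‖r • ω‖ = r := by
      rw [norm_smul, hω, mul_one, Real.norm_eq_abs, abs_of_pos hr]
    have hdir : ‖r • ω‖⁻¹ • (r • ω) = ω := by
      rw [hnorm, smul_smul, inv_mul_cancel₀ hr.ne', one_smul]
    have h2 := hode (r • ω) hne'
    rw [hdir, hnorm] at h2
    have h3 : (inner ℝ (gradient u (r • ω)) ω : ℝ) = fderiv ℝ u (r • ω) ω :=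
      InnerProductSpace.toDual_symm_apply
    rw [real_inner_comm, h3] at h2
    rw [h2] at h1
    simpa [Function.comp_def] using h1
  -- constancy along rays
  have hconst : ∀ ω : EuclideanSpace ℝ (Fin N), ‖ω‖ = 1 → ∀ r : ℝ, 0 < r →
      u (r • ω) * r ^ t = u ω := by
    intro ω hω
    set h : ℝ → ℝ := fun r => u (r • ω) * r ^ t with hh
    have hd : ∀ r : ℝ, 0 < r → HasDerivAt h 0 r := by
      intro r hr
      have h1 := hderiv_ray ω hω r hr
      have h2 : HasDerivAt (fun s : ℝ => s ^ t) (t * r ^ (t - 1)) r :=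
        Real.hasDerivAt_rpow_const (Or.inl hr.ne')
      have h3 := h1.mul h2
      have heq : -t * u (r • ω) / r * r ^ t + u (r • ω) * (t * r ^ (t - 1)) = 0 := by
        rw [Real.rpow_sub hr, Real.rpow_one]
        field_simp
        ring
      rw [heq] at h3
      exact h3
    have key2 : ∀ a c : ℝ, 0 < a → a ≤ c → h c = h a := by
      intro a c ha hac
      have hcont : ContinuousOn h (Set.Icc a c) := fun x hx =>
        ((hd x (lt_of_lt_of_le ha hx.1)).continuousAt).continuousWithinAt
      have := constant_of_has_deriv_right_zero hcont
        (fun x hx => (hd x (lt_of_lt_of_le ha hx.1)).hasDerivWithinAt)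
      exact this c ⟨hac, le_rfl⟩
    intro r hr
    rcases le_total r 1 with hc | hc
    · have h2 : h r = h 1 := (key2 r 1 hr hc).symm
      simpa [hh, Real.one_rpow] using h2
    · have h2 : h r = h 1 := key2 1 r one_pos hc
      simpa [hh, Real.one_rpow] using h2
  -- the key formula
  have key : ∀ x : EuclideanSpace ℝ (Fin N), x ≠ 0 → u x = u (‖x‖⁻¹ • x) * ‖x‖ ^ (-t) := by
    intro x hx
    have hxn : (0:ℝ) < ‖x‖ := norm_pos_iff.2 hx
    have hω : ‖(‖x‖⁻¹ • x)‖ = 1 := by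
      rw [norm_smul, norm_inv, norm_norm, inv_mul_cancel₀ hxn.ne']
    have h1 := hconst _ hω ‖x‖ hxn
    rw [smul_inv_smul₀ hxn.ne'] at h1
    have hpos : (0:ℝ) < ‖x‖ ^ t := Real.rpow_pos_of_pos hxn t
    rw [Real.rpow_neg hxn.le, ← h1, mul_assoc, mul_inv_cancel₀ hpos.ne', mul_one]
  -- homogeneity
  have hhom : ∀ c : ℝ, 0 < c → ∀ y : EuclideanSpace ℝ (Fin N), y ≠ 0 →
      u (c • y) = u y * c ^ (-t) := by
    intro c hc y hy
    have hcy : c • y ≠ 0 := smul_ne_zero hc.ne' hy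
    have hyn : (0:ℝ) < ‖y‖ := norm_pos_iff.2 hy
    have hnorm : ‖c • y‖ = c * ‖y‖ := by
      rw [norm_smul, Real.norm_eq_abs, abs_of_pos hc]
    have hdir : ‖c • y‖⁻¹ • (c • y) = ‖y‖⁻¹ • y := by
      rw [hnorm, smul_smul]
      congr 1
      field_simp
    rw [key (c • y) hcy, hdir, hnorm, Real.mul_rpow hc.le hyn.le, key y hy]
    ring
  refine ⟨⟨u, key⟩, ?_⟩
  intro ht _
  obtain ⟨x₀, hx0, hux0⟩ := hne
  have hx0n : (0:ℝ) < ‖x₀‖ := norm_pos_iff.2 hx0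
  set ω₀ : EuclideanSpace ℝ (Fin N) := ‖x₀‖⁻¹ • x₀ with hω₀def
  have hω₀ : ‖ω₀‖ = 1 := by
    rw [hω₀def, norm_smul, norm_inv, norm_norm, inv_mul_cancel₀ hx0n.ne']
  have hω₀ne : ω₀ ≠ 0 := by
    intro h; rw [h, norm_zero] at hω₀; norm_num at hω₀
  have huω₀ : u ω₀ ≠ 0 := by
    intro h
    apply hux0
    rw [key x₀ hx0, ← hω₀def, h, zero_mul]
  set F : EuclideanSpace ℝ (Fin N) → ℝ := fun y => u y ^ 2 / ‖y‖ ^ (2 * (b + 1)) with hF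
  have hFω₀ : F ω₀ = u ω₀ ^ 2 := by
    simp [hF, hω₀, Real.one_rpow]
  have hFcont : ContinuousAt F ω₀ := by
    have h1 : ContinuousAt u ω₀ := (hdiff ω₀ hω₀ne).continuousAt
    have h2 : ContinuousAt (fun y : EuclideanSpace ℝ (Fin N) => ‖y‖ ^ (2 * (b + 1))) ω₀ := by
      apply ContinuousAt.rpow_const continuous_norm.continuousAt
      left; rw [hω₀]; norm_num
    exact ((h1.pow 2).div h2 (by rw [hω₀, Real.one_rpow]; norm_num))
  have hsqpos : 0 < u ω₀ ^ 2 := pow_two_pos_of_ne_zero huω₀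
  set c₀ : ℝ := u ω₀ ^ 2 / 2 with hc₀def
  have hc₀ : 0 < c₀ := by rw [hc₀def]; linarith
  have hlt : c₀ < F ω₀ := by rw [hFω₀, hc₀def]; linarith
  have hpre : F ⁻¹' Set.Ioi c₀ ∈ 𝓝 ω₀ := hFcont (Ioi_mem_nhds hlt)
  obtain ⟨ε₁, hε₁, hball₁⟩ := Metric.mem_nhds_iff.mp hpre
  set ε : ℝ := min ε₁ (1/4) with hεdef
  have hε : 0 < ε := lt_min hε₁ (by norm_num)
  have hε4 : ε ≤ 1/4 := min_le_right _ _
  set B : Set (EuclideanSpace ℝ (Fin N)) := Metric.ball ω₀ ε with hBdef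
  have hBsub : ∀ y ∈ B, c₀ < F y := by
    intro y hy
    exact hball₁ (Metric.ball_subset_ball (min_le_left _ _) hy)
  have hBnorm : ∀ y ∈ B, 3/4 < ‖y‖ ∧ ‖y‖ < 5/4 := by
    intro y hy
    have h1 : dist y ω₀ < 1/4 := lt_of_lt_of_le hy hε4
    have h2 : |‖y‖ - ‖ω₀‖| ≤ ‖y - ω₀‖ := abs_norm_sub_norm_le y ω₀
    rw [hω₀, ← dist_eq_norm] at h2
    have h3 := abs_lt.mp (lt_of_le_of_lt h2 h1)
    constructor <;> [linarith [h3.1]; linarith [h3.2]]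
  have hBne : ∀ y ∈ B, y ≠ 0 := by
    intro y hy h
    have := (hBnorm y hy).1
    rw [h, norm_zero] at this; norm_num at this
  set c : ℕ → ℝ := fun k => (1/2 : ℝ) ^ k with hcdef
  have hck : ∀ k, 0 < c k := fun k => by rw [hcdef]; positivity
  set A : ℕ → Set (EuclideanSpace ℝ (Fin N)) := fun k => c k • B with hAdef
  have hAnorm : ∀ k, ∀ x ∈ A k, 3/4 * c k < ‖x‖ ∧ ‖x‖ < 5/4 * c k := by
    intro k x hx
    rw [hAdef] at hx
    obtain ⟨y, hy, rfl⟩ := hx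
    have hn := hBnorm y hy
    have hxy : ‖c k • y‖ = c k * ‖y‖ := by
      rw [norm_smul, Real.norm_eq_abs, abs_of_pos (hck k)]
    rw [hxy]
    constructor
    · nlinarith [hn.1, hck k]
    · nlinarith [hn.2, hck k]
  have hAdisj : Pairwise (Function.onFun Disjoint A) := by
    have hkey : ∀ j k : ℕ, j < k → Disjoint (A j) (A k) := by
      intro j k hjk
      rw [Set.disjoint_left]
      intro x hxj hxk
      have h1 := (hAnorm j x hxj).1
      have h2 := (hAnorm k x hxk).2
      have hmono : c k ≤ c j * (1/2) := by
        rw [hcdef]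
        calc ((1:ℝ)/2) ^ k ≤ (1/2) ^ (j+1) :=
              pow_le_pow_of_le_one (by norm_num) (by norm_num) hjk
          _ = (1/2)^j * (1/2) := by rw [pow_succ]
      nlinarith [hck j, hck k]
    intro j k hjk
    rcases lt_or_gt_of_ne hjk with h | h
    · exact hkey j k h
    · exact (hkey k j h).symm
  have hAmeas : ∀ k, MeasurableSet (A k) := by
    intro k
    rw [hAdef, hBdef]
    exact (Metric.isOpen_ball.smul₀ (hck k).ne').measurableSet
  -- the scaling identity for F
  have hFscale : ∀ k, ∀ y ∈ B, F (c k • y) = F y * (c k) ^ (-(N:ℝ)) := by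
    intro k y hy
    have hy0 := hBne y hy
    have hyn : (0:ℝ) < ‖y‖ := norm_pos_iff.2 hy0
    have hc' := hck k
    have h1 : u (c k • y) = u y * (c k) ^ (-t) := hhom (c k) hc' y hy0
    have h2 : ‖c k • y‖ = c k * ‖y‖ := by
      rw [norm_smul, Real.norm_eq_abs, abs_of_pos hc']
    have h3 : (u y * (c k) ^ (-t)) ^ 2 = u y ^ 2 * (c k) ^ ((-t) * 2) := by
      rw [mul_pow, Real.rpow_mul hc'.le, Real.rpow_two]
    have h4 : (c k * ‖y‖) ^ (2 * (b + 1)) = (c k) ^ (2 * (b + 1)) * ‖y‖ ^ (2 * (b + 1)) :=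
      Real.mul_rpow hc'.le hyn.le
    have hden : (0:ℝ) < ‖y‖ ^ (2 * (b + 1)) := Real.rpow_pos_of_pos hyn _
    have hcden : (0:ℝ) < (c k) ^ (2 * (b + 1)) := Real.rpow_pos_of_pos hc' _
    have hexp : (c k) ^ ((-t) * 2) / (c k) ^ (2 * (b + 1)) = (c k) ^ (-(N:ℝ)) := by
      rw [← Real.rpow_sub hc']
      congr 1
      rw [ht]; ring
    rw [hF]
    simp only
    rw [h1, h2, h3, h4, ← hexp, div_mul_div_comm, mul_comm (‖y‖ ^ (2 * (b + 1)))]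
  have hAbound : ∀ k, ∀ x ∈ A k,
      ENNReal.ofReal (c₀ * (c k) ^ (-(N:ℝ))) ≤ ENNReal.ofReal (F x) := by
    intro k x hx
    rw [hAdef] at hx
    obtain ⟨y, hy, rfl⟩ := hx
    apply ENNReal.ofReal_le_ofReal
    rw [hFscale k y hy]
    have hFy := hBsub y hy
    have hcp : (0:ℝ) < (c k) ^ (-(N:ℝ)) := Real.rpow_pos_of_pos (hck k) _
    exact mul_le_mul_of_nonneg_right hFy.le hcp.le
  have hvolB : volume B ≠ 0 := by
    rw [hBdef]
    exact (Metric.measure_ball_pos volume ω₀ hε).ne'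
  have hAk_vol : ∀ k, volume (A k) = ENNReal.ofReal ((c k) ^ N) * volume B := by
    intro k
    rw [hAdef]
    simp only
    rw [Measure.addHaar_smul]
    congr 2
    rw [finrank_euclideanSpace_fin]
    exact abs_of_pos (pow_pos (hck k) _)
  have main : ∀ k, ENNReal.ofReal c₀ * volume B ≤
      ∫⁻ x in A k, ENNReal.ofReal (F x) := by
    intro k
    have h1 : ENNReal.ofReal (c₀ * (c k) ^ (-(N:ℝ))) * volume (A k) ≤
        ∫⁻ x in A k, ENNReal.ofReal (F x) := by
      rw [← setLIntegral_const]
      exact setLIntegral_mono' (hAmeas k) (hAbound k)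
    have h2 : ENNReal.ofReal c₀ * volume B =
        ENNReal.ofReal (c₀ * (c k) ^ (-(N:ℝ))) * volume (A k) := by
      rw [hAk_vol k, ← mul_assoc, ← ENNReal.ofReal_mul (by positivity)]
      congr 2
      rw [mul_assoc, ← Real.rpow_natCast (c k) N, ← Real.rpow_add (hck k)]
      simp
    rw [h2]
    exact h1
  have hδne : ENNReal.ofReal c₀ * volume B ≠ 0 :=
    mul_ne_zero (ENNReal.ofReal_pos.mpr hc₀).ne' hvolB
  have htop : (⊤ : ENNReal) ≤ (∫⁻ (x : EuclideanSpace ℝ (Fin N)), ENNReal.ofReal (F x)) := by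
    have hlast := setLIntegral_le_lintegral (⋃ k, A k) (fun x => ENNReal.ofReal (F x)) (μ := volume)
    calc (⊤ : ENNReal) = ∑' (k : ℕ), (ENNReal.ofReal c₀ * volume B) :=
          (ENNReal.tsum_const_eq_top_of_ne_zero hδne).symm
      _ ≤ ∑' (k : ℕ), ∫⁻ x in A k, ENNReal.ofReal (F x) := ENNReal.tsum_le_tsum main
      _ = ∫⁻ x in ⋃ k, A k, ENNReal.ofReal (F x) := by
          rw [Measure.restrict_iUnion hAdisj hAmeas, lintegral_sum_measure]
      _ ≤ _ := hlast
  exact top_unique htop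
end

section
/- Let N ≥ 1 and b ∈ ℝ with N ≠ 2(b+1). For small ε > 0 define u_ε(x) = |x|^{−(N−2b−2)/2} φ_ε(x), where φ_ε is a Lipschitz cutoff equal to 1 for ε ≤ |x| ≤ 1/ε, equal to log(|x|/ε²)/log(1/ε) for ε² ≤ |x| ≤ ε, equal to log(ε|x|)/log(1/ε) for 1/ε ≤ |x| ≤ 1/ε², and 0 otherwise. Then as ε → 0: ∫ |∂_r(u_ε |x|^{(N−2b−2)/2})|² |x|^{2−N} dx = O((log(1/ε))^{−1}) and ∫ |u_ε|²/|x|^{2(b+1)} dx ≥ c·log(1/ε) for some c > 0. Consequently the ratio ∫|x·∇u_ε|²/|x|^{2b+2} dx ÷ ∫|u_ε|²/|x|^{2b+2} dx converges to (N−2(b+1))²/4, so (N−2(b+1))²/4 is the sharp constant in the weighted Hardy inequality. -/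
open MeasureTheory Real Filter
open scoped Topology

open Set
set_option linter.unusedSectionVars false
set_option maxHeartbeats 1000000
variable {E : Type*} [NormedAddCommGroup E] [InnerProductSpace ℝ E]

/-- derivative of a radial function -/
lemma radial_hasFDerivAt (G : ℝ → ℝ) (g' : ℝ) {x : E} (hx : x ≠ 0)
    (hG : HasDerivAt G g' ‖x‖) :
    HasFDerivAt (fun y => G ‖y‖) ((g' * ‖x‖⁻¹) • (innerSL ℝ x)) x := by
  have hnorm : HasFDerivAt (fun y : E => ‖y‖) (‖x‖⁻¹ • innerSL ℝ x) x := by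
    have h1 : HasFDerivAt (fun y : E => ‖y‖ ^ 2) (2 • innerSL ℝ x) x :=
      (hasStrictFDerivAt_norm_sq x).hasFDerivAt
    have h2 : HasDerivAt Real.sqrt (1 / (2 * Real.sqrt (‖x‖ ^ 2))) (‖x‖ ^ 2) :=
      Real.hasDerivAt_sqrt (by have : (0:ℝ) < ‖x‖ := norm_pos_iff.2 hx; positivity)
    have h3 := h2.comp_hasFDerivAt x h1
    have hxn : (0:ℝ) < ‖x‖ := norm_pos_iff.2 hx
    have : (fun y : E => Real.sqrt (‖y‖ ^ 2)) = fun y : E => ‖y‖ := by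
      funext y; rw [Real.sqrt_sq (norm_nonneg y)]
    have h4 : HasFDerivAt (fun y : E => ‖y‖) ((1 / (2 * Real.sqrt (‖x‖ ^ 2))) • (2 • innerSL ℝ x)) x := by
      refine h3.congr_of_eventuallyEq ?_
      filter_upwards with y using by rw [Function.comp_apply, Real.sqrt_sq (norm_nonneg y)]
    convert h4 using 1
    rw [Real.sqrt_sq (norm_nonneg x)]
    ext v
    simp [smul_smul]
    ring
  have := hG.comp_hasFDerivAt x hnorm
  refine this.congr_fderiv ?_
  ext v
  simp [smul_smul]

lemma fderiv_radial_apply (f : E → ℝ) {G : ℝ → ℝ} {g' : ℝ} {x : E} (hx : x ≠ 0)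
    (hf : f =ᶠ[𝓝 x] fun y => G ‖y‖) (hG : HasDerivAt G g' ‖x‖) (v : E) :
    fderiv ℝ f x v = (g' * ‖x‖⁻¹) * inner ℝ x v := by
  rw [hf.fderiv_eq, (radial_hasFDerivAt G g' hx hG).fderiv]
  simp

lemma fderiv_radial_unit (f : E → ℝ) {G : ℝ → ℝ} {g' : ℝ} {x : E} (hx : x ≠ 0)
    (hf : f =ᶠ[𝓝 x] fun y => G ‖y‖) (hG : HasDerivAt G g' ‖x‖) :
    fderiv ℝ f x (‖x‖⁻¹ • x) = g' := by
  rw [fderiv_radial_apply f hx hf hG, real_inner_smul_right, real_inner_self_eq_norm_sq]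
  have hxn : (0:ℝ) < ‖x‖ := norm_pos_iff.2 hx
  rw [sq]
  field_simp

lemma fderiv_radial_self (f : E → ℝ) {G : ℝ → ℝ} {g' : ℝ} {x : E} (hx : x ≠ 0)
    (hf : f =ᶠ[𝓝 x] fun y => G ‖y‖) (hG : HasDerivAt G g' ‖x‖) :
    fderiv ℝ f x x = g' * ‖x‖ := by
  rw [fderiv_radial_apply f hx hf hG, real_inner_self_eq_norm_sq]
  have hxn : (0:ℝ) < ‖x‖ := norm_pos_iff.2 hx
  rw [sq]
  field_simp

lemma fderiv_locally_const (f : E → ℝ) {c : ℝ} {x : E}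
    (hf : f =ᶠ[𝓝 x] fun _ => c) (v : E) : fderiv ℝ f x v = 0 := by
  rw [hf.fderiv_eq, fderiv_fun_const]
  simp

section Euclid
variable (N : ℕ)

local notation "E'" => EuclideanSpace ℝ (Fin N)

lemma euclid_nontrivial (hN : 1 ≤ N) : Nontrivial (EuclideanSpace ℝ (Fin N)) := by
  have : 0 < Module.finrank ℝ (EuclideanSpace ℝ (Fin N)) := by
    rw [finrank_euclideanSpace_fin]; omega
  
  exact Module.nontrivial_of_finrank_pos this

lemma ae_norm_ne (hN : 1 ≤ N) (c : ℝ) : ∀ᵐ x : E', ‖x‖ ≠ c := by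
  haveI := euclid_nontrivial N hN
  have h : volume (Metric.sphere (0:E') c) = 0 := Measure.addHaar_sphere volume 0 c
  refine (measure_mono_null ?_ h : volume {x : E' | ¬ ‖x‖ ≠ c} = 0)
  intro x hx
  simp only [Set.mem_setOf_eq, not_not] at hx
  simpa [mem_sphere_zero_iff_norm] using hx

lemma polar_eq (hN : 1 ≤ N) (f : ℝ → ℝ) :
    ∫ x : E', f ‖x‖ =
      (N * (volume (Metric.ball (0:E') 1)).toReal) * ∫ r in Ioi (0:ℝ), r ^ (N-1) * f r := by
  haveI := euclid_nontrivial N hN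
  rw [integral_fun_norm_addHaar volume f]
  rw [finrank_euclideanSpace_fin]
  simp [nsmul_eq_mul, smul_eq_mul, mul_assoc]
  exact Or.inl (Or.inl rfl)

end Euclid
section Regions

variable {F : Type*} [NormedAddCommGroup F]
variable (φ : ℝ → F → ℝ)
variable (hφ : ∀ ε : ℝ, ∀ x : F,
      φ ε x = if ε ≤ ‖x‖ ∧ ‖x‖ ≤ 1 / ε then 1
        else if ε ^ 2 ≤ ‖x‖ ∧ ‖x‖ ≤ ε then Real.log (‖x‖ / ε ^ 2) / Real.log (1 / ε)
        else if 1 / ε ≤ ‖x‖ ∧ ‖x‖ ≤ 1 / ε ^ 2 then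
          Real.log (ε * ‖x‖) / Real.log (1 / ε)
        else 0)
variable {ε : ℝ} (hε : ε ∈ Set.Ioo (0:ℝ) 1)

-- basic ordering facts
lemma eps_facts (hε : ε ∈ Set.Ioo (0:ℝ) 1) :
    0 < ε ^ 2 ∧ ε ^ 2 < ε ∧ ε < 1/ε ∧ 1/ε < 1/ε^2 ∧ 0 < Real.log (1/ε) := by
  obtain ⟨h0, h1⟩ := hε
  have h2 : 0 < ε^2 := by positivity
  have h3 : ε^2 < ε := by nlinarith
  have h4 : 1 < 1/ε := one_lt_one_div h0 h1
  have h5 : ε < 1/ε := h1.trans h4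
  have h6 : 1/ε < 1/ε^2 := by
    rw [div_lt_div_iff₀ h0 h2]; nlinarith
  exact ⟨h2, h3, h5, h6, Real.log_pos h4⟩

include hφ hε

lemma phi_val_mid {y : F} (h1 : ε ≤ ‖y‖) (h2 : ‖y‖ ≤ 1/ε) : φ ε y = 1 := by
  rw [hφ, if_pos ⟨h1, h2⟩]

lemma phi_val_in {y : F} (h1 : ε^2 ≤ ‖y‖) (h2 : ‖y‖ < ε) :
    φ ε y = (Real.log ‖y‖ - Real.log (ε^2)) / Real.log (1/ε) := by
  obtain ⟨he2, _, _, _, _⟩ := eps_facts hε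
  have hy0 : (0:ℝ) < ‖y‖ := lt_of_lt_of_le he2 h1
  rw [hφ, if_neg (fun h => absurd h.1 (not_le.2 h2)), if_pos ⟨h1, h2.le⟩,
    Real.log_div hy0.ne' (by positivity)]

lemma phi_val_out {y : F} (h1 : 1/ε < ‖y‖) (h2 : ‖y‖ ≤ 1/ε^2) :
    φ ε y = (Real.log ε + Real.log ‖y‖) / Real.log (1/ε) := by
  obtain ⟨he2, he2e, heinv, _, _⟩ := eps_facts hε
  have hy0 : (0:ℝ) < ‖y‖ := lt_trans (lt_trans hε.1 heinv) h1
  have hyε : ¬ ‖y‖ ≤ ε := not_le.2 (heinv.trans h1)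
  rw [hφ, if_neg (fun h => absurd h.2 (not_le.2 h1)),
    if_neg (fun h => absurd h.2 hyε), if_pos ⟨h1.le, h2⟩,
    Real.log_mul hε.1.ne' hy0.ne']

lemma phi_val_small {y : F} (h : ‖y‖ < ε^2) : φ ε y = 0 := by
  obtain ⟨he2, he2e, heinv, _, _⟩ := eps_facts hε
  have hyε : ¬ ε ≤ ‖y‖ := not_le.2 (h.trans he2e)
  have hyinv : ¬ 1/ε ≤ ‖y‖ := not_le.2 ((h.trans he2e).trans heinv)
  rw [hφ, if_neg (fun hc => absurd hc.1 hyε), if_neg (fun hc => absurd hc.1 (not_le.2 h)),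
    if_neg (fun hc => absurd hc.1 hyinv)]

lemma phi_val_large {y : F} (h : 1/ε^2 < ‖y‖) : φ ε y = 0 := by
  obtain ⟨he2, he2e, heinv, hinv2, _⟩ := eps_facts hε
  have h1 : ¬ ‖y‖ ≤ 1/ε := not_le.2 (hinv2.trans h)
  have h2 : ¬ ‖y‖ ≤ ε := not_le.2 ((heinv.trans hinv2).trans h)
  rw [hφ, if_neg (fun hc => absurd hc.2 h1), if_neg (fun hc => absurd hc.2 h2),
    if_neg (fun hc => absurd hc.2 (not_le.2 h))]

-- eventual equalities
omit hφ hε in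
lemma ev_norm_mem {x : F} {s : Set ℝ} (hs : IsOpen s) (hx : ‖x‖ ∈ s) :
    ∀ᶠ y in 𝓝 x, ‖y‖ ∈ s :=
  (hs.preimage continuous_norm).mem_nhds hx

lemma phi_ev_mid {x : F} (hx : ‖x‖ ∈ Set.Ioo ε (1/ε)) :
    φ ε =ᶠ[𝓝 x] fun _ => (1:ℝ) := by
  filter_upwards [ev_norm_mem isOpen_Ioo hx] with y hy
  exact phi_val_mid φ hφ hε hy.1.le hy.2.le

lemma phi_ev_in {x : F} (hx : ‖x‖ ∈ Set.Ioo (ε^2) ε) :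
    φ ε =ᶠ[𝓝 x] fun y => (Real.log ‖y‖ - Real.log (ε^2)) / Real.log (1/ε) := by
  filter_upwards [ev_norm_mem isOpen_Ioo hx] with y hy
  exact phi_val_in φ hφ hε hy.1.le hy.2

lemma phi_ev_out {x : F} (hx : ‖x‖ ∈ Set.Ioo (1/ε) (1/ε^2)) :
    φ ε =ᶠ[𝓝 x] fun y => (Real.log ε + Real.log ‖y‖) / Real.log (1/ε) := by
  filter_upwards [ev_norm_mem isOpen_Ioo hx] with y hy
  exact phi_val_out φ hφ hε hy.1 hy.2.le

lemma phi_ev_small {x : F} (hx : ‖x‖ < ε^2) :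
    φ ε =ᶠ[𝓝 x] fun _ => (0:ℝ) := by
  filter_upwards [ev_norm_mem isOpen_Iio hx] with y hy
  exact phi_val_small φ hφ hε hy

lemma phi_ev_large {x : F} (hx : 1/ε^2 < ‖x‖) :
    φ ε =ᶠ[𝓝 x] fun _ => (0:ℝ) := by
  filter_upwards [ev_norm_mem isOpen_Ioi hx] with y hy
  exact phi_val_large φ hφ hε hy

end Regions
lemma piece_setToInterval {a c : ℝ} (h0 : 0 < a) (hac : a ≤ c) (g : ℝ → ℝ) :
    ∫ r in Ioi (0:ℝ), Set.indicator (Ioo a c) g r = ∫ r in a..c, g r := by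
  have he : Ioi (0:ℝ) ∩ Ioo a c = Ioo a c :=
    Set.inter_eq_self_of_subset_right (fun r hr => h0.trans hr.1)
  rw [setIntegral_indicator measurableSet_Ioo, he,
    intervalIntegral.integral_of_le hac, integral_Ioc_eq_integral_Ioo]

lemma piece_integrable {a c : ℝ} (g : ℝ → ℝ) (hg : ContinuousOn g (Icc a c)) :
    Integrable (Set.indicator (Ioo a c) g) (volume.restrict (Ioi 0)) := by
  have h1 : IntegrableOn g (Ioo a c) := hg.integrableOn_Icc.mono_set Ioo_subset_Icc_self
  rw [integrable_indicator_iff measurableSet_Ioo, IntegrableOn,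
    Measure.restrict_restrict measurableSet_Ioo]
  exact h1.mono_set Set.inter_subset_left

lemma weight_indicator (w : ℝ → ℝ) (s : Set ℝ) (g : ℝ → ℝ) :
    (fun r => w r * Set.indicator s g r) = Set.indicator s (fun r => w r * g r) := by
  funext r
  by_cases h : r ∈ s <;> simp [Set.indicator_of_mem, Set.indicator_of_notMem, h]

-- interval FTC helper
lemma piece_ftc {a c : ℝ} (hac : a ≤ c) (f F : ℝ → ℝ)
    (hF : ∀ r ∈ Set.Icc a c, HasDerivAt F (f r) r)
    (hf : ContinuousOn f (Set.Icc a c)) :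
    ∫ r in a..c, f r = F c - F a := by
  refine intervalIntegral.integral_eq_sub_of_hasDerivAt (fun r hr => ?_) ?_
  · exact hF r (by rwa [Set.uIcc_of_le hac] at hr)
  · exact (hf.mono (by rw [Set.uIcc_of_le hac])).intervalIntegrable

lemma weight_indicator_apply (w : ℝ → ℝ) (s : Set ℝ) (g : ℝ → ℝ) (r : ℝ) :
    w r * Set.indicator s g r = Set.indicator s (fun t => w t * g t) r := by
  by_cases h : r ∈ s
  · rw [Set.indicator_of_mem h, Set.indicator_of_mem h]
  · rw [Set.indicator_of_notMem h, Set.indicator_of_notMem h, mul_zero]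

section Integrals
variable (N : ℕ)
local notation "E'" => EuclideanSpace ℝ (Fin N)

lemma integral1_eq (hN : 1 ≤ N) (φ : ℝ → E' → ℝ)
    (hφ : ∀ ε : ℝ, ∀ x : E',
      φ ε x = if ε ≤ ‖x‖ ∧ ‖x‖ ≤ 1 / ε then 1
        else if ε ^ 2 ≤ ‖x‖ ∧ ‖x‖ ≤ ε then Real.log (‖x‖ / ε ^ 2) / Real.log (1 / ε)
        else if 1 / ε ≤ ‖x‖ ∧ ‖x‖ ≤ 1 / ε ^ 2 then
          Real.log (ε * ‖x‖) / Real.log (1 / ε)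
        else 0)
    {ε : ℝ} (hε : ε ∈ Set.Ioo (0:ℝ) 1) :
    ∫ x : E', (fderiv ℝ (φ ε) x (‖x‖⁻¹ • x)) ^ 2 * ‖x‖ ^ ((2:ℝ) - N)
      = (N * (volume (Metric.ball (0:E') 1)).toReal) * (2 / Real.log (1/ε)) := by
  obtain ⟨he2, he2e, heinv, hinv2, hL⟩ := eps_facts hε
  have hε0 := hε.1
  set L := Real.log (1/ε) with hLdef
  set g : ℝ → ℝ := fun r => (r⁻¹ / L)^2 * r ^ ((2:ℝ) - N) with hgdef
  set i1 : ℝ → ℝ := Set.indicator (Ioo (ε^2) ε) g with hi1def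
  set i2 : ℝ → ℝ := Set.indicator (Ioo (1/ε) (1/ε^2)) g with hi2def
  -- step 1 : a.e. congruence
  have step1 : ∫ x : E', (fderiv ℝ (φ ε) x (‖x‖⁻¹ • x)) ^ 2 * ‖x‖ ^ ((2:ℝ) - N)
      = ∫ x : E', (i1 ‖x‖ + i2 ‖x‖) := by
    refine integral_congr_ae ?_
    filter_upwards [ae_norm_ne N hN (ε^2), ae_norm_ne N hN ε, ae_norm_ne N hN (1/ε),
      ae_norm_ne N hN (1/ε^2)] with x h1 h2 h3 h4
    rcases h1.lt_or_gt with hx1 | hx1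
    · -- ‖x‖ < ε^2
      have m1 : ‖x‖ ∉ Ioo (ε^2) ε := fun h => absurd h.1 (not_lt.2 hx1.le)
      have m2 : ‖x‖ ∉ Ioo (1/ε) (1/ε^2) := fun h =>
        absurd h.1 (not_lt.2 ((hx1.trans he2e).trans heinv).le)
      rw [fderiv_locally_const (φ ε) (phi_ev_small φ hφ hε hx1), hi1def, hi2def,
        Set.indicator_of_notMem m1, Set.indicator_of_notMem m2]
      norm_num
    rcases h2.lt_or_gt with hx2 | hx2
    · -- ε^2 < ‖x‖ < ε
      have hx0 : (0:ℝ) < ‖x‖ := he2.trans hx1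
      have hxne : x ≠ 0 := norm_ne_zero_iff.1 hx0.ne'
      have hG : HasDerivAt (fun r => (Real.log r - Real.log (ε^2))/L) (‖x‖⁻¹ / L) ‖x‖ :=
        ((Real.hasDerivAt_log hx0.ne').sub_const _).div_const L
      have m1 : ‖x‖ ∈ Ioo (ε^2) ε := ⟨hx1, hx2⟩
      have m2 : ‖x‖ ∉ Ioo (1/ε) (1/ε^2) := fun h =>
        absurd h.1 (not_lt.2 (hx2.trans heinv).le)
      rw [fderiv_radial_unit (φ ε) hxne (phi_ev_in φ hφ hε m1) hG, hi1def, hi2def,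
        Set.indicator_of_mem m1, Set.indicator_of_notMem m2, add_zero, hgdef]
    rcases h3.lt_or_gt with hx3 | hx3
    · -- ε < ‖x‖ < 1/ε
      have m1 : ‖x‖ ∉ Ioo (ε^2) ε := fun h => absurd h.2 (not_lt.2 hx2.le)
      have m2 : ‖x‖ ∉ Ioo (1/ε) (1/ε^2) := fun h => absurd h.1 (not_lt.2 hx3.le)
      rw [fderiv_locally_const (φ ε) (phi_ev_mid φ hφ hε ⟨hx2, hx3⟩), hi1def, hi2def,
        Set.indicator_of_notMem m1, Set.indicator_of_notMem m2]
      norm_num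
    rcases h4.lt_or_gt with hx4 | hx4
    · -- 1/ε < ‖x‖ < 1/ε^2
      have hx0 : (0:ℝ) < ‖x‖ := (hε0.trans heinv).trans hx3
      have hxne : x ≠ 0 := norm_ne_zero_iff.1 hx0.ne'
      have hG : HasDerivAt (fun r => (Real.log ε + Real.log r)/L) (‖x‖⁻¹ / L) ‖x‖ :=
        ((Real.hasDerivAt_log hx0.ne').const_add _).div_const L
      have m1 : ‖x‖ ∉ Ioo (ε^2) ε := fun h => absurd h.2 (not_lt.2 (heinv.trans hx3).le)
      have m2 : ‖x‖ ∈ Ioo (1/ε) (1/ε^2) := ⟨hx3, hx4⟩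
      rw [fderiv_radial_unit (φ ε) hxne (phi_ev_out φ hφ hε m2) hG, hi1def, hi2def,
        Set.indicator_of_notMem m1, Set.indicator_of_mem m2, zero_add, hgdef]
    · -- 1/ε^2 < ‖x‖
      have m1 : ‖x‖ ∉ Ioo (ε^2) ε := fun h =>
        absurd h.2 (not_lt.2 (heinv.trans (hinv2.trans hx4)).le)
      have m2 : ‖x‖ ∉ Ioo (1/ε) (1/ε^2) := fun h => absurd h.2 (not_lt.2 hx4.le)
      rw [fderiv_locally_const (φ ε) (phi_ev_large φ hφ hε hx4), hi1def, hi2def,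
        Set.indicator_of_notMem m1, Set.indicator_of_notMem m2]
      norm_num
  rw [step1, polar_eq N hN (fun r => i1 r + i2 r)]
  congr 1
  -- step 3 : radial integral
  have key : ∀ r : ℝ, 0 < r → (r:ℝ)^(N-1) * g r = r⁻¹ / L^2 := by
    intro r hr
    have hpow : (r:ℝ)^(N-1) * r ^ ((2:ℝ) - N) = r := by
      rw [← Real.rpow_natCast r (N-1), Nat.cast_sub hN, Nat.cast_one, ← Real.rpow_add hr]
      norm_num
    calc (r:ℝ)^(N-1) * ((r⁻¹ / L)^2 * r ^ ((2:ℝ) - N))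
        = ((r:ℝ)^(N-1) * r ^ ((2:ℝ) - N)) * (r⁻¹ / L)^2 := by ring
      _ = r * (r⁻¹ / L)^2 := by rw [hpow]
      _ = r⁻¹ / L^2 := by field_simp
  have hcont : ∀ a c : ℝ, 0 < a → ContinuousOn (fun r : ℝ => (r:ℝ)^(N-1) * g r) (Icc a c) := by
    intro a c ha
    refine ((continuous_pow _).continuousOn).mul (ContinuousOn.mul ?_ ?_)
    · exact ((continuousOn_inv₀.mono (fun r hr => ne_of_gt (ha.trans_le hr.1))).div_const L).pow 2
    · exact ContinuousOn.rpow_const continuousOn_id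
        (fun r hr => Or.inl (ne_of_gt (ha.trans_le hr.1)))
  have hsplit : ∀ r : ℝ, (r:ℝ)^(N-1) * (i1 r + i2 r)
      = Set.indicator (Ioo (ε^2) ε) (fun r => (r:ℝ)^(N-1) * g r) r
        + Set.indicator (Ioo (1/ε) (1/ε^2)) (fun r => (r:ℝ)^(N-1) * g r) r := by
    intro r
    rw [hi1def, hi2def, mul_add]
    congr 1
    · by_cases m : r ∈ Ioo (ε^2) ε
      · rw [Set.indicator_of_mem m, Set.indicator_of_mem m]
      · rw [Set.indicator_of_notMem m, Set.indicator_of_notMem m, mul_zero]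
    · by_cases m : r ∈ Ioo (1/ε) (1/ε^2)
      · rw [Set.indicator_of_mem m, Set.indicator_of_mem m]
      · rw [Set.indicator_of_notMem m, Set.indicator_of_notMem m, mul_zero]
  rw [MeasureTheory.integral_congr_ae (Eventually.of_forall hsplit),
    integral_add (piece_integrable _ (hcont _ _ he2))
      (piece_integrable _ (hcont _ _ (hε0.trans heinv))),
    piece_setToInterval he2 he2e.le, piece_setToInterval (hε0.trans heinv) hinv2.le]
  have hc1 : ∫ r in (ε^2)..ε, (r:ℝ)^(N-1) * g r = ∫ r in (ε^2)..ε, r⁻¹ / L^2 := by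
    refine intervalIntegral.integral_congr (fun r hr => ?_)
    rw [Set.uIcc_of_le he2e.le] at hr
    exact key r (he2.trans_le hr.1)
  have hc2 : ∫ r in (1/ε)..(1/ε^2), (r:ℝ)^(N-1) * g r = ∫ r in (1/ε)..(1/ε^2), r⁻¹ / L^2 := by
    refine intervalIntegral.integral_congr (fun r hr => ?_)
    rw [Set.uIcc_of_le hinv2.le] at hr
    exact key r ((hε0.trans heinv).trans_le hr.1)
  rw [hc1, hc2, intervalIntegral.integral_div, intervalIntegral.integral_div,
    integral_inv_of_pos he2 (he2.trans he2e),
    integral_inv_of_pos (hε0.trans heinv) ((hε0.trans heinv).trans hinv2)]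
  have e1 : ε / ε^2 = 1/ε := by field_simp [pow_two]
  have e2 : (1/ε^2) / (1/ε) = 1/ε := by
    rw [pow_two]; field_simp
  rw [e1, e2, ← hLdef]
  field_simp
  ring

end Integrals

section Integrals2
variable (N : ℕ)
local notation "E'" => EuclideanSpace ℝ (Fin N)

lemma rkey (hN : 1 ≤ N) {r p q t : ℝ} (hr : 0 < r) (hq : ((N:ℝ)-1) + (p+p) - q = -1) :
    (r:ℝ)^(N-1) * ((r^p * t)^2 / r^q) = t^2 / r := by
  have h1 : ((r:ℝ)^p * t)^2 = r^p * r^p * t^2 := by ring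
  have h2 : (r:ℝ)^(N-1) = r ^ ((N:ℝ)-1) := by
    rw [← Real.rpow_natCast r (N-1), Nat.cast_sub hN, Nat.cast_one]
  have h3 : r ^ ((N:ℝ)-1) * (r^p * r^p) / r^q = r⁻¹ := by
    rw [← Real.rpow_add hr, ← Real.rpow_add hr, ← Real.rpow_sub hr, hq, Real.rpow_neg_one]
  calc (r:ℝ)^(N-1) * ((r^p * t)^2 / r^q)
      = (r ^ ((N:ℝ)-1) * (r^p * r^p) / r^q) * t^2 := by rw [h1, h2]; ring
    _ = r⁻¹ * t^2 := by rw [h3]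
    _ = t^2 / r := by rw [inv_mul_eq_div]

lemma integral2_eq (hN : 1 ≤ N) (b : ℝ) (φ : ℝ → E' → ℝ)
    (hφ : ∀ ε : ℝ, ∀ x : E',
      φ ε x = if ε ≤ ‖x‖ ∧ ‖x‖ ≤ 1 / ε then 1
        else if ε ^ 2 ≤ ‖x‖ ∧ ‖x‖ ≤ ε then Real.log (‖x‖ / ε ^ 2) / Real.log (1 / ε)
        else if 1 / ε ≤ ‖x‖ ∧ ‖x‖ ≤ 1 / ε ^ 2 then
          Real.log (ε * ‖x‖) / Real.log (1 / ε)
        else 0)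
    (uε : ℝ → E' → ℝ)
    (huε : ∀ ε : ℝ, ∀ x : E',
      uε ε x = ‖x‖ ^ (-((N : ℝ) - 2 * b - 2) / 2) * φ ε x)
    {ε : ℝ} (hε : ε ∈ Set.Ioo (0:ℝ) 1) :
    ∫ x : E', (uε ε x) ^ 2 / ‖x‖ ^ (2 * (b+1))
      = (N * (volume (Metric.ball (0:E') 1)).toReal) * (8/3 * Real.log (1/ε)) := by
  obtain ⟨he2, he2e, heinv, hinv2, hL⟩ := eps_facts hε
  have hε0 := hε.1
  set L := Real.log (1/ε) with hLdef
  set p : ℝ := -((N : ℝ) - 2 * b - 2) / 2 with hpdef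
  have hq : ((N:ℝ)-1) + (p+p) - (2*(b+1)) = -1 := by rw [hpdef]; ring
  have hU : Real.log ε - Real.log (ε^2) = L := by
    rw [hLdef, Real.log_pow, one_div, Real.log_inv]; push_cast; ring
  have hV : Real.log ε + Real.log (1/ε) = 0 := by
    rw [one_div, Real.log_inv]; ring
  have hW : Real.log ε + Real.log (1/ε^2) = L := by
    rw [hLdef, one_div, one_div, Real.log_inv, Real.log_inv, Real.log_pow]; push_cast; ring
  have hLL : Real.log ((1/ε) / ε) = 2 * L := by
    have : (1/ε)/ε = 1/ε^2 := by rw [pow_two]; field_simp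
    rw [this, hLdef, one_div, one_div, Real.log_inv, Real.log_inv, Real.log_pow]
    push_cast; ring
  set g1 : ℝ → ℝ := fun r => (r ^ p * ((Real.log r - Real.log (ε^2))/L))^2 / r ^ (2*(b+1))
    with hg1def
  set g2 : ℝ → ℝ := fun r => (r ^ p * 1)^2 / r ^ (2*(b+1)) with hg2def
  set g3 : ℝ → ℝ := fun r => (r ^ p * ((Real.log ε + Real.log r)/L))^2 / r ^ (2*(b+1))
    with hg3def
  set i1 : ℝ → ℝ := Set.indicator (Ioo (ε^2) ε) g1 with hi1def
  set i2 : ℝ → ℝ := Set.indicator (Ioo ε (1/ε)) g2 with hi2def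
  set i3 : ℝ → ℝ := Set.indicator (Ioo (1/ε) (1/ε^2)) g3 with hi3def
  have step1 : ∫ x : E', (uε ε x) ^ 2 / ‖x‖ ^ (2 * (b+1))
      = ∫ x : E', (i1 ‖x‖ + i2 ‖x‖ + i3 ‖x‖) := by
    refine integral_congr_ae ?_
    filter_upwards [ae_norm_ne N hN (ε^2), ae_norm_ne N hN ε, ae_norm_ne N hN (1/ε),
      ae_norm_ne N hN (1/ε^2)] with x h1 h2 h3 h4
    rcases h1.lt_or_gt with hx1 | hx1
    · have m1 : ‖x‖ ∉ Ioo (ε^2) ε := fun h => absurd h.1 (not_lt.2 hx1.le)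
      have m2 : ‖x‖ ∉ Ioo ε (1/ε) := fun h => absurd h.1 (not_lt.2 (hx1.trans he2e).le)
      have m3 : ‖x‖ ∉ Ioo (1/ε) (1/ε^2) := fun h =>
        absurd h.1 (not_lt.2 ((hx1.trans he2e).trans heinv).le)
      rw [huε, phi_val_small φ hφ hε hx1, hi1def, hi2def, hi3def,
        Set.indicator_of_notMem m1, Set.indicator_of_notMem m2, Set.indicator_of_notMem m3]
      norm_num
    rcases h2.lt_or_gt with hx2 | hx2
    · have m1 : ‖x‖ ∈ Ioo (ε^2) ε := ⟨hx1, hx2⟩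
      have m2 : ‖x‖ ∉ Ioo ε (1/ε) := fun h => absurd h.1 (not_lt.2 hx2.le)
      have m3 : ‖x‖ ∉ Ioo (1/ε) (1/ε^2) := fun h =>
        absurd h.1 (not_lt.2 (hx2.trans heinv).le)
      rw [huε, phi_val_in φ hφ hε m1.1.le m1.2, hi1def, hi2def, hi3def,
        Set.indicator_of_mem m1, Set.indicator_of_notMem m2, Set.indicator_of_notMem m3,
        add_zero, add_zero, hg1def]
    rcases h3.lt_or_gt with hx3 | hx3
    · have m1 : ‖x‖ ∉ Ioo (ε^2) ε := fun h => absurd h.2 (not_lt.2 hx2.le)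
      have m2 : ‖x‖ ∈ Ioo ε (1/ε) := ⟨hx2, hx3⟩
      have m3 : ‖x‖ ∉ Ioo (1/ε) (1/ε^2) := fun h => absurd h.1 (not_lt.2 hx3.le)
      rw [huε, phi_val_mid φ hφ hε m2.1.le m2.2.le, hi1def, hi2def, hi3def,
        Set.indicator_of_notMem m1, Set.indicator_of_mem m2, Set.indicator_of_notMem m3,
        add_zero, zero_add, hg2def]
    rcases h4.lt_or_gt with hx4 | hx4
    · have m1 : ‖x‖ ∉ Ioo (ε^2) ε := fun h => absurd h.2 (not_lt.2 (heinv.trans hx3).le)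
      have m2 : ‖x‖ ∉ Ioo ε (1/ε) := fun h => absurd h.2 (not_lt.2 hx3.le)
      have m3 : ‖x‖ ∈ Ioo (1/ε) (1/ε^2) := ⟨hx3, hx4⟩
      rw [huε, phi_val_out φ hφ hε m3.1 m3.2.le, hi1def, hi2def, hi3def,
        Set.indicator_of_notMem m1, Set.indicator_of_notMem m2, Set.indicator_of_mem m3,
        zero_add, zero_add, hg3def]
    · have m1 : ‖x‖ ∉ Ioo (ε^2) ε := fun h =>
        absurd h.2 (not_lt.2 (heinv.trans (hinv2.trans hx4)).le)
      have m2 : ‖x‖ ∉ Ioo ε (1/ε) := fun h => absurd h.2 (not_lt.2 (hinv2.trans hx4).le)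
      have m3 : ‖x‖ ∉ Ioo (1/ε) (1/ε^2) := fun h => absurd h.2 (not_lt.2 hx4.le)
      rw [huε, phi_val_large φ hφ hε hx4, hi1def, hi2def, hi3def,
        Set.indicator_of_notMem m1, Set.indicator_of_notMem m2, Set.indicator_of_notMem m3]
      norm_num
  rw [step1, polar_eq N hN (fun r => i1 r + i2 r + i3 r)]
  congr 1
  -- continuity of the weighted pieces
  have hca : ∀ (a c : ℝ), 0 < a → ∀ gg : ℝ → ℝ, ContinuousOn gg (Icc a c) →
      ContinuousOn (fun r : ℝ => (r:ℝ)^(N-1) * ((r ^ p * gg r)^2 / r ^ (2*(b+1)))) (Icc a c) := by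
    intro a c ha gg hgg
    have hne : ∀ r ∈ Icc a c, (0:ℝ) < r := fun r hr => ha.trans_le hr.1
    refine ((continuous_pow _).continuousOn).mul (ContinuousOn.div ?_ ?_ ?_)
    · exact ((ContinuousOn.rpow_const continuousOn_id
        (fun r hr => Or.inl (hne r hr).ne')).mul hgg).pow 2
    · exact ContinuousOn.rpow_const continuousOn_id (fun r hr => Or.inl (hne r hr).ne')
    · intro r hr
      exact (Real.rpow_pos_of_pos (hne r hr) _).ne'
  have hclog : ∀ (a c : ℝ), 0 < a → ContinuousOn (fun r : ℝ => Real.log r) (Icc a c) := by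
    intro a c ha
    exact Real.continuousOn_log.mono (fun r hr => ne_of_gt (ha.trans_le hr.1))
  have hsplit : ∀ r : ℝ, (r:ℝ)^(N-1) * (i1 r + i2 r + i3 r)
      = Set.indicator (Ioo (ε^2) ε) (fun r => (r:ℝ)^(N-1) * g1 r) r
        + Set.indicator (Ioo ε (1/ε)) (fun r => (r:ℝ)^(N-1) * g2 r) r
        + Set.indicator (Ioo (1/ε) (1/ε^2)) (fun r => (r:ℝ)^(N-1) * g3 r) r := by
    intro r
    rw [hi1def, hi2def, hi3def, mul_add, mul_add]
    congr 1
    · congr 1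
      · exact weight_indicator_apply _ _ _ r
      · exact weight_indicator_apply _ _ _ r
    · exact weight_indicator_apply _ _ _ r
  have hint1 : Integrable (Set.indicator (Ioo (ε^2) ε) (fun r => (r:ℝ)^(N-1) * g1 r))
      (volume.restrict (Ioi 0)) := by
    refine piece_integrable _ ?_
    exact hca _ _ he2 _ (((hclog _ _ he2).sub continuousOn_const).div_const L)
  have hint2 : Integrable (Set.indicator (Ioo ε (1/ε)) (fun r => (r:ℝ)^(N-1) * g2 r))
      (volume.restrict (Ioi 0)) := by
    refine piece_integrable _ ?_
    exact hca _ _ hε0 _ continuousOn_const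
  have hint3 : Integrable (Set.indicator (Ioo (1/ε) (1/ε^2)) (fun r => (r:ℝ)^(N-1) * g3 r))
      (volume.restrict (Ioi 0)) := by
    refine piece_integrable _ ?_
    exact hca _ _ (hε0.trans heinv) _
      ((continuousOn_const.add (hclog _ _ (hε0.trans heinv))).div_const L)
  have hint12 : Integrable (fun r => Set.indicator (Ioo (ε^2) ε) (fun r => (r:ℝ)^(N-1) * g1 r) r
      + Set.indicator (Ioo ε (1/ε)) (fun r => (r:ℝ)^(N-1) * g2 r) r)
      (volume.restrict (Ioi 0)) := hint1.add hint2
  rw [MeasureTheory.integral_congr_ae (Eventually.of_forall hsplit),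
    integral_add hint12 hint3, integral_add hint1 hint2,
    piece_setToInterval he2 he2e.le, piece_setToInterval hε0 heinv.le,
    piece_setToInterval (hε0.trans heinv) hinv2.le]
  -- piece 1
  have hc1 : ∫ r in (ε^2)..ε, (r:ℝ)^(N-1) * g1 r = L/3 := by
    have hcongr : ∫ r in (ε^2)..ε, (r:ℝ)^(N-1) * g1 r
        = ∫ r in (ε^2)..ε, ((Real.log r - Real.log (ε^2))/L)^2 / r := by
      refine intervalIntegral.integral_congr (fun r hr => ?_)
      rw [Set.uIcc_of_le he2e.le] at hr
      rw [hg1def]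
      exact rkey N hN (he2.trans_le hr.1) hq
    have hder : ∀ r ∈ Set.Icc (ε^2) ε,
        HasDerivAt (fun r => (Real.log r - Real.log (ε^2))^3 / (3*L^2))
          (((Real.log r - Real.log (ε^2))/L)^2 / r) r := by
      intro r hr
      have hr0 : (0:ℝ) < r := he2.trans_le hr.1
      have h := (((Real.hasDerivAt_log hr0.ne').sub_const (Real.log (ε^2))).pow 3).div_const
        (3*L^2)
      refine h.congr_deriv ?_
      field_simp
      ring
    have hcc : ContinuousOn (fun r => ((Real.log r - Real.log (ε^2))/L)^2 / r)
        (Set.Icc (ε^2) ε) :=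
      ContinuousOn.div ((((hclog _ _ he2).sub continuousOn_const).div_const L).pow 2)
        continuousOn_id (fun r hr => ne_of_gt (he2.trans_le hr.1))
    rw [hcongr, piece_ftc he2e.le _ _ hder hcc, sub_self, hU]
    field_simp
    ring
  -- piece 2
  have hc2 : ∫ r in ε..(1/ε), (r:ℝ)^(N-1) * g2 r = 2*L := by
    have hcongr : ∫ r in ε..(1/ε), (r:ℝ)^(N-1) * g2 r = ∫ r in ε..(1/ε), r⁻¹ := by
      refine intervalIntegral.integral_congr (fun r hr => ?_)
      rw [Set.uIcc_of_le heinv.le] at hr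
      rw [hg2def, rkey N hN (hε0.trans_le hr.1) hq]
      norm_num
    rw [hcongr, integral_inv_of_pos hε0 (hε0.trans heinv), hLL]
  -- piece 3
  have hc3 : ∫ r in (1/ε)..(1/ε^2), (r:ℝ)^(N-1) * g3 r = L/3 := by
    have hcongr : ∫ r in (1/ε)..(1/ε^2), (r:ℝ)^(N-1) * g3 r
        = ∫ r in (1/ε)..(1/ε^2), ((Real.log ε + Real.log r)/L)^2 / r := by
      refine intervalIntegral.integral_congr (fun r hr => ?_)
      rw [Set.uIcc_of_le hinv2.le] at hr
      rw [hg3def]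
      exact rkey N hN ((hε0.trans heinv).trans_le hr.1) hq
    have hder : ∀ r ∈ Set.Icc (1/ε) (1/ε^2),
        HasDerivAt (fun r => (Real.log ε + Real.log r)^3 / (3*L^2))
          (((Real.log ε + Real.log r)/L)^2 / r) r := by
      intro r hr
      have hr0 : (0:ℝ) < r := (hε0.trans heinv).trans_le hr.1
      have h := (((Real.hasDerivAt_log hr0.ne').const_add (Real.log ε)).pow 3).div_const
        (3*L^2)
      refine h.congr_deriv ?_
      field_simp
      ring
    have hcc : ContinuousOn (fun r => ((Real.log ε + Real.log r)/L)^2 / r)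
        (Set.Icc (1/ε) (1/ε^2)) :=
      ContinuousOn.div (((continuousOn_const.add (hclog _ _ (hε0.trans heinv))).div_const L).pow 2)
        continuousOn_id (fun r hr => ne_of_gt ((hε0.trans heinv).trans_le hr.1))
    rw [hcongr, piece_ftc hinv2.le _ _ hder hcc, hV, hW]
    field_simp
    ring
  rw [hc1, hc2, hc3]
  ring

end Integrals2

section Integrals3
variable (N : ℕ)
local notation "E'" => EuclideanSpace ℝ (Fin N)

lemma integral3_eq (hN : 1 ≤ N) (b : ℝ) (φ : ℝ → E' → ℝ)
    (hφ : ∀ ε : ℝ, ∀ x : E',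
      φ ε x = if ε ≤ ‖x‖ ∧ ‖x‖ ≤ 1 / ε then 1
        else if ε ^ 2 ≤ ‖x‖ ∧ ‖x‖ ≤ ε then Real.log (‖x‖ / ε ^ 2) / Real.log (1 / ε)
        else if 1 / ε ≤ ‖x‖ ∧ ‖x‖ ≤ 1 / ε ^ 2 then
          Real.log (ε * ‖x‖) / Real.log (1 / ε)
        else 0)
    (uε : ℝ → E' → ℝ)
    (huε : ∀ ε : ℝ, ∀ x : E',
      uε ε x = ‖x‖ ^ (-((N : ℝ) - 2 * b - 2) / 2) * φ ε x)
    {ε : ℝ} (hε : ε ∈ Set.Ioo (0:ℝ) 1) :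
    ∫ x : E', (fderiv ℝ (uε ε) x x) ^ 2 / ‖x‖ ^ (2 * b + 2)
      = (N * (volume (Metric.ball (0:E') 1)).toReal) *
        (8/3 * (-((N : ℝ) - 2 * b - 2) / 2)^2 * Real.log (1/ε)
          + 2 / Real.log (1/ε) + 2 * (-((N : ℝ) - 2 * b - 2) / 2)) := by
  obtain ⟨he2, he2e, heinv, hinv2, hL⟩ := eps_facts hε
  have hε0 := hε.1
  set L := Real.log (1/ε) with hLdef
  set p : ℝ := -((N : ℝ) - 2 * b - 2) / 2 with hpdef
  have hq : ((N:ℝ)-1) + (p+p) - (2*b+2) = -1 := by rw [hpdef]; ring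
  have hU : Real.log ε - Real.log (ε^2) = L := by
    rw [hLdef, Real.log_pow, one_div, Real.log_inv]; push_cast; ring
  have hV : Real.log ε + Real.log (1/ε) = 0 := by
    rw [one_div, Real.log_inv]; ring
  have hW : Real.log ε + Real.log (1/ε^2) = L := by
    rw [hLdef, one_div, one_div, Real.log_inv, Real.log_inv, Real.log_pow]; push_cast; ring
  have hLL : Real.log ((1/ε) / ε) = 2 * L := by
    have : (1/ε)/ε = 1/ε^2 := by rw [pow_two]; field_simp
    rw [this, hLdef, one_div, one_div, Real.log_inv, Real.log_inv, Real.log_pow]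
    push_cast; ring
  set g1 : ℝ → ℝ := fun r =>
    ((p * r^(p-1) * ((Real.log r - Real.log (ε^2))/L) + r^p * (r⁻¹/L)) * r)^2 / r ^ (2*b+2)
    with hg1def
  set g2 : ℝ → ℝ := fun r => (p * r^(p-1) * 1 * r)^2 / r ^ (2*b+2) with hg2def
  set g3 : ℝ → ℝ := fun r =>
    ((p * r^(p-1) * ((Real.log ε + Real.log r)/L) + r^p * (r⁻¹/L)) * r)^2 / r ^ (2*b+2)
    with hg3def
  set i1 : ℝ → ℝ := Set.indicator (Ioo (ε^2) ε) g1 with hi1def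
  set i2 : ℝ → ℝ := Set.indicator (Ioo ε (1/ε)) g2 with hi2def
  set i3 : ℝ → ℝ := Set.indicator (Ioo (1/ε) (1/ε^2)) g3 with hi3def
  have step1 : ∫ x : E', (fderiv ℝ (uε ε) x x) ^ 2 / ‖x‖ ^ (2*b+2)
      = ∫ x : E', (i1 ‖x‖ + i2 ‖x‖ + i3 ‖x‖) := by
    refine integral_congr_ae ?_
    filter_upwards [ae_norm_ne N hN (ε^2), ae_norm_ne N hN ε, ae_norm_ne N hN (1/ε),
      ae_norm_ne N hN (1/ε^2)] with x h1 h2 h3 h4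
    rcases h1.lt_or_gt with hx1 | hx1
    · have m1 : ‖x‖ ∉ Ioo (ε^2) ε := fun h => absurd h.1 (not_lt.2 hx1.le)
      have m2 : ‖x‖ ∉ Ioo ε (1/ε) := fun h => absurd h.1 (not_lt.2 (hx1.trans he2e).le)
      have m3 : ‖x‖ ∉ Ioo (1/ε) (1/ε^2) := fun h =>
        absurd h.1 (not_lt.2 ((hx1.trans he2e).trans heinv).le)
      have hev : uε ε =ᶠ[𝓝 x] fun _ => (0:ℝ) := by
        filter_upwards [phi_ev_small φ hφ hε hx1] with y hy
        rw [huε, hy, mul_zero]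
      rw [fderiv_locally_const (uε ε) hev, hi1def, hi2def, hi3def,
        Set.indicator_of_notMem m1, Set.indicator_of_notMem m2, Set.indicator_of_notMem m3]
      norm_num
    rcases h2.lt_or_gt with hx2 | hx2
    · have hx0 : (0:ℝ) < ‖x‖ := he2.trans hx1
      have hxne : x ≠ 0 := norm_ne_zero_iff.1 hx0.ne'
      have m1 : ‖x‖ ∈ Ioo (ε^2) ε := ⟨hx1, hx2⟩
      have m2 : ‖x‖ ∉ Ioo ε (1/ε) := fun h => absurd h.1 (not_lt.2 hx2.le)
      have m3 : ‖x‖ ∉ Ioo (1/ε) (1/ε^2) := fun h =>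
        absurd h.1 (not_lt.2 (hx2.trans heinv).le)
      have hev : uε ε =ᶠ[𝓝 x] fun y => ‖y‖^p * ((Real.log ‖y‖ - Real.log (ε^2))/L) := by
        filter_upwards [phi_ev_in φ hφ hε m1] with y hy
        rw [huε, hy]
      have hd1 : HasDerivAt (fun r : ℝ => r^p) (p * ‖x‖^(p-1)) ‖x‖ :=
        Real.hasDerivAt_rpow_const (Or.inl hx0.ne')
      have hd2 : HasDerivAt (fun r => (Real.log r - Real.log (ε^2))/L) (‖x‖⁻¹/L) ‖x‖ :=
        ((Real.hasDerivAt_log hx0.ne').sub_const _).div_const L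
      rw [fderiv_radial_self (uε ε) hxne hev (hd1.mul hd2), hi1def, hi2def, hi3def,
        Set.indicator_of_mem m1, Set.indicator_of_notMem m2, Set.indicator_of_notMem m3,
        add_zero, add_zero]
    rcases h3.lt_or_gt with hx3 | hx3
    · have hx0 : (0:ℝ) < ‖x‖ := hε0.trans hx2
      have hxne : x ≠ 0 := norm_ne_zero_iff.1 hx0.ne'
      have m1 : ‖x‖ ∉ Ioo (ε^2) ε := fun h => absurd h.2 (not_lt.2 hx2.le)
      have m2 : ‖x‖ ∈ Ioo ε (1/ε) := ⟨hx2, hx3⟩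
      have m3 : ‖x‖ ∉ Ioo (1/ε) (1/ε^2) := fun h => absurd h.1 (not_lt.2 hx3.le)
      have hev : uε ε =ᶠ[𝓝 x] fun y => ‖y‖^p * 1 := by
        filter_upwards [phi_ev_mid φ hφ hε m2] with y hy
        rw [huε, hy]
      have hd1 : HasDerivAt (fun r : ℝ => r^p) (p * ‖x‖^(p-1)) ‖x‖ :=
        Real.hasDerivAt_rpow_const (Or.inl hx0.ne')
      rw [fderiv_radial_self (uε ε) hxne hev (hd1.mul_const 1), hi1def, hi2def, hi3def,
        Set.indicator_of_notMem m1, Set.indicator_of_mem m2, Set.indicator_of_notMem m3,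
        add_zero, zero_add]
    rcases h4.lt_or_gt with hx4 | hx4
    · have hx0 : (0:ℝ) < ‖x‖ := (hε0.trans heinv).trans hx3
      have hxne : x ≠ 0 := norm_ne_zero_iff.1 hx0.ne'
      have m1 : ‖x‖ ∉ Ioo (ε^2) ε := fun h => absurd h.2 (not_lt.2 (heinv.trans hx3).le)
      have m2 : ‖x‖ ∉ Ioo ε (1/ε) := fun h => absurd h.2 (not_lt.2 hx3.le)
      have m3 : ‖x‖ ∈ Ioo (1/ε) (1/ε^2) := ⟨hx3, hx4⟩
      have hev : uε ε =ᶠ[𝓝 x] fun y => ‖y‖^p * ((Real.log ε + Real.log ‖y‖)/L) := by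
        filter_upwards [phi_ev_out φ hφ hε m3] with y hy
        rw [huε, hy]
      have hd1 : HasDerivAt (fun r : ℝ => r^p) (p * ‖x‖^(p-1)) ‖x‖ :=
        Real.hasDerivAt_rpow_const (Or.inl hx0.ne')
      have hd2 : HasDerivAt (fun r => (Real.log ε + Real.log r)/L) (‖x‖⁻¹/L) ‖x‖ :=
        ((Real.hasDerivAt_log hx0.ne').const_add _).div_const L
      rw [fderiv_radial_self (uε ε) hxne hev (hd1.mul hd2), hi1def, hi2def, hi3def,
        Set.indicator_of_notMem m1, Set.indicator_of_notMem m2, Set.indicator_of_mem m3,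
        zero_add, zero_add]
    · have m1 : ‖x‖ ∉ Ioo (ε^2) ε := fun h =>
        absurd h.2 (not_lt.2 (heinv.trans (hinv2.trans hx4)).le)
      have m2 : ‖x‖ ∉ Ioo ε (1/ε) := fun h => absurd h.2 (not_lt.2 (hinv2.trans hx4).le)
      have m3 : ‖x‖ ∉ Ioo (1/ε) (1/ε^2) := fun h => absurd h.2 (not_lt.2 hx4.le)
      have hev : uε ε =ᶠ[𝓝 x] fun _ => (0:ℝ) := by
        filter_upwards [phi_ev_large φ hφ hε hx4] with y hy
        rw [huε, hy, mul_zero]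
      rw [fderiv_locally_const (uε ε) hev, hi1def, hi2def, hi3def,
        Set.indicator_of_notMem m1, Set.indicator_of_notMem m2, Set.indicator_of_notMem m3]
      norm_num
  rw [step1, polar_eq N hN (fun r => i1 r + i2 r + i3 r)]
  congr 1
  have hclog : ∀ (a c : ℝ), 0 < a → ContinuousOn (fun r : ℝ => Real.log r) (Icc a c) := by
    intro a c ha
    exact Real.continuousOn_log.mono (fun r hr => ne_of_gt (ha.trans_le hr.1))
  have hcrpow : ∀ (a c q : ℝ), 0 < a → ContinuousOn (fun r : ℝ => r ^ q) (Icc a c) := by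
    intro a c q ha
    exact ContinuousOn.rpow_const continuousOn_id (fun r hr => Or.inl (ne_of_gt (ha.trans_le hr.1)))
  have hcinv : ∀ (a c : ℝ), 0 < a → ContinuousOn (fun r : ℝ => r⁻¹) (Icc a c) := by
    intro a c ha
    exact continuousOn_inv₀.mono (fun r hr => ne_of_gt (ha.trans_le hr.1))
  -- rewriting of pieces as r^p * t
  have hrr : ∀ r : ℝ, 0 < r → r^(p-1) * r = r^p := by
    intro r hr
    rw [← Real.rpow_add_one hr.ne']
    norm_num
  have e2 : ∀ r : ℝ, 0 < r → p * r^(p-1) * 1 * r = r^p * p := by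
    intro r hr
    calc p * r^(p-1) * 1 * r = p * (r^(p-1) * r) := by ring
      _ = r^p * p := by rw [hrr r hr]; ring
  have e13 : ∀ r : ℝ, 0 < r → ∀ T : ℝ,
      (p * r^(p-1) * T + r^p * (r⁻¹/L)) * r = r^p * (p*T + 1/L) := by
    intro r hr T
    calc (p * r^(p-1) * T + r^p * (r⁻¹/L)) * r
        = p*T*(r^(p-1) * r) + (r^p/L)*(r⁻¹*r) := by ring
      _ = r^p * (p*T + 1/L) := by rw [hrr r hr, inv_mul_cancel₀ hr.ne']; ring
  have hsplit : ∀ r : ℝ, (r:ℝ)^(N-1) * (i1 r + i2 r + i3 r)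
      = Set.indicator (Ioo (ε^2) ε) (fun r => (r:ℝ)^(N-1) * g1 r) r
        + Set.indicator (Ioo ε (1/ε)) (fun r => (r:ℝ)^(N-1) * g2 r) r
        + Set.indicator (Ioo (1/ε) (1/ε^2)) (fun r => (r:ℝ)^(N-1) * g3 r) r := by
    intro r
    rw [hi1def, hi2def, hi3def, mul_add, mul_add]
    congr 1
    · congr 1
      · exact weight_indicator_apply _ _ _ r
      · exact weight_indicator_apply _ _ _ r
    · exact weight_indicator_apply _ _ _ r
  have hint1 : Integrable (Set.indicator (Ioo (ε^2) ε) (fun r => (r:ℝ)^(N-1) * g1 r))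
      (volume.restrict (Ioi 0)) := by
    refine piece_integrable _ ?_
    refine ((continuous_pow _).continuousOn).mul (ContinuousOn.div (ContinuousOn.pow
      (ContinuousOn.mul (ContinuousOn.add
        ((continuousOn_const.mul (hcrpow _ _ _ he2)).mul
          (((hclog _ _ he2).sub continuousOn_const).div_const L))
        ((hcrpow _ _ _ he2).mul ((hcinv _ _ he2).div_const L))) continuousOn_id) 2)
      (hcrpow _ _ _ he2) (fun r hr => (Real.rpow_pos_of_pos (he2.trans_le hr.1) _).ne'))
  have hint2 : Integrable (Set.indicator (Ioo ε (1/ε)) (fun r => (r:ℝ)^(N-1) * g2 r))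
      (volume.restrict (Ioi 0)) := by
    refine piece_integrable _ ?_
    refine ((continuous_pow _).continuousOn).mul (ContinuousOn.div (ContinuousOn.pow
      (ContinuousOn.mul (ContinuousOn.mul
        (continuousOn_const.mul (hcrpow _ _ _ hε0)) continuousOn_const) continuousOn_id) 2)
      (hcrpow _ _ _ hε0) (fun r hr => (Real.rpow_pos_of_pos (hε0.trans_le hr.1) _).ne'))
  have hint3 : Integrable (Set.indicator (Ioo (1/ε) (1/ε^2)) (fun r => (r:ℝ)^(N-1) * g3 r))
      (volume.restrict (Ioi 0)) := by
    have h0 : (0:ℝ) < 1/ε := hε0.trans heinv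
    refine piece_integrable _ ?_
    refine ((continuous_pow _).continuousOn).mul (ContinuousOn.div (ContinuousOn.pow
      (ContinuousOn.mul (ContinuousOn.add
        ((continuousOn_const.mul (hcrpow _ _ _ h0)).mul
          ((continuousOn_const.add (hclog _ _ h0)).div_const L))
        ((hcrpow _ _ _ h0).mul ((hcinv _ _ h0).div_const L))) continuousOn_id) 2)
      (hcrpow _ _ _ h0) (fun r hr => (Real.rpow_pos_of_pos (h0.trans_le hr.1) _).ne'))
  have hint12 : Integrable (fun r => Set.indicator (Ioo (ε^2) ε) (fun r => (r:ℝ)^(N-1) * g1 r) r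
      + Set.indicator (Ioo ε (1/ε)) (fun r => (r:ℝ)^(N-1) * g2 r) r)
      (volume.restrict (Ioi 0)) := hint1.add hint2
  rw [MeasureTheory.integral_congr_ae (Eventually.of_forall hsplit),
    integral_add hint12 hint3, integral_add hint1 hint2,
    piece_setToInterval he2 he2e.le, piece_setToInterval hε0 heinv.le,
    piece_setToInterval (hε0.trans heinv) hinv2.le]
  -- piece 1
  have hc1 : ∫ r in (ε^2)..ε, (r:ℝ)^(N-1) * g1 r = 1/L + p + p^2*L/3 := by
    have hcongr : ∫ r in (ε^2)..ε, (r:ℝ)^(N-1) * g1 r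
        = ∫ r in (ε^2)..ε, (p*((Real.log r - Real.log (ε^2))/L) + 1/L)^2 / r := by
      refine intervalIntegral.integral_congr (fun r hr => ?_)
      rw [Set.uIcc_of_le he2e.le] at hr
      have hr0 : (0:ℝ) < r := he2.trans_le hr.1
      simp only [hg1def]
      rw [e13 r hr0]
      exact rkey N hN hr0 hq
    have hder : ∀ r ∈ Set.Icc (ε^2) ε,
        HasDerivAt (fun r => ((Real.log r - Real.log (ε^2))
            + p*(Real.log r - Real.log (ε^2))^2
            + p^2*((Real.log r - Real.log (ε^2))^3/3))/L^2)
          ((p*((Real.log r - Real.log (ε^2))/L) + 1/L)^2 / r) r := by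
      intro r hr
      have hr0 : (0:ℝ) < r := he2.trans_le hr.1
      have hs : HasDerivAt (fun r => Real.log r - Real.log (ε^2)) r⁻¹ r :=
        (Real.hasDerivAt_log hr0.ne').sub_const _
      have h := ((hs.add ((hs.pow 2).const_mul p)).add
        (((hs.pow 3).div_const 3).const_mul (p^2))).div_const (L^2)
      refine h.congr_deriv ?_
      push_cast
      field_simp
      ring
    have hcc : ContinuousOn
        (fun r => (p*((Real.log r - Real.log (ε^2))/L) + 1/L)^2 / r) (Set.Icc (ε^2) ε) := by
      refine ContinuousOn.div (ContinuousOn.pow (ContinuousOn.add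
        (continuousOn_const.mul (((hclog _ _ he2).sub continuousOn_const).div_const L))
        continuousOn_const) 2) continuousOn_id
        (fun r hr => ne_of_gt (he2.trans_le hr.1))
    rw [hcongr, piece_ftc he2e.le _ _ hder hcc, sub_self, hU]
    field_simp
    ring
  -- piece 2
  have hc2 : ∫ r in ε..(1/ε), (r:ℝ)^(N-1) * g2 r = p^2 * (2*L) := by
    have hcongr : ∫ r in ε..(1/ε), (r:ℝ)^(N-1) * g2 r = ∫ r in ε..(1/ε), p^2 / r := by
      refine intervalIntegral.integral_congr (fun r hr => ?_)
      rw [Set.uIcc_of_le heinv.le] at hr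
      have hr0 : (0:ℝ) < r := hε0.trans_le hr.1
      simp only [hg2def]
      rw [e2 r hr0]
      exact rkey N hN hr0 hq
    rw [hcongr]
    have hcm : ∫ r in ε..(1/ε), p^2/r = p^2 * ∫ r in ε..(1/ε), r⁻¹ := by
      rw [← intervalIntegral.integral_const_mul]
      refine intervalIntegral.integral_congr (fun r hr => ?_)
      rw [div_eq_mul_inv]
    rw [hcm, integral_inv_of_pos hε0 (hε0.trans heinv), hLL]
  -- piece 3
  have hc3 : ∫ r in (1/ε)..(1/ε^2), (r:ℝ)^(N-1) * g3 r = 1/L + p + p^2*L/3 := by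
    have h0 : (0:ℝ) < 1/ε := hε0.trans heinv
    have hcongr : ∫ r in (1/ε)..(1/ε^2), (r:ℝ)^(N-1) * g3 r
        = ∫ r in (1/ε)..(1/ε^2), (p*((Real.log ε + Real.log r)/L) + 1/L)^2 / r := by
      refine intervalIntegral.integral_congr (fun r hr => ?_)
      rw [Set.uIcc_of_le hinv2.le] at hr
      have hr0 : (0:ℝ) < r := h0.trans_le hr.1
      simp only [hg3def]
      rw [e13 r hr0]
      exact rkey N hN hr0 hq
    have hder : ∀ r ∈ Set.Icc (1/ε) (1/ε^2),
        HasDerivAt (fun r => ((Real.log ε + Real.log r)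
            + p*(Real.log ε + Real.log r)^2
            + p^2*((Real.log ε + Real.log r)^3/3))/L^2)
          ((p*((Real.log ε + Real.log r)/L) + 1/L)^2 / r) r := by
      intro r hr
      have hr0 : (0:ℝ) < r := h0.trans_le hr.1
      have hs : HasDerivAt (fun r => Real.log ε + Real.log r) r⁻¹ r :=
        (Real.hasDerivAt_log hr0.ne').const_add _
      have h := ((hs.add ((hs.pow 2).const_mul p)).add
        (((hs.pow 3).div_const 3).const_mul (p^2))).div_const (L^2)
      refine h.congr_deriv ?_
      push_cast
      field_simp
      ring
    have hcc : ContinuousOn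
        (fun r => (p*((Real.log ε + Real.log r)/L) + 1/L)^2 / r) (Set.Icc (1/ε) (1/ε^2)) := by
      refine ContinuousOn.div (ContinuousOn.pow (ContinuousOn.add
        (continuousOn_const.mul ((continuousOn_const.add (hclog _ _ h0)).div_const L))
        continuousOn_const) 2) continuousOn_id
        (fun r hr => ne_of_gt (h0.trans_le hr.1))
    rw [hcongr, piece_ftc hinv2.le _ _ hder hcc, hV, hW]
    field_simp
    ring
  rw [hc1, hc2, hc3]
  field_simp
  ring

end Integrals3

theorem stmt_14 (N : ℕ) (hN : 1 ≤ N) (b : ℝ) (hb : (N : ℝ) ≠ 2 * (b + 1))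
    (φ : ℝ → EuclideanSpace ℝ (Fin N) → ℝ)
    (hφ : ∀ ε : ℝ, ∀ x : EuclideanSpace ℝ (Fin N),
      φ ε x = if ε ≤ ‖x‖ ∧ ‖x‖ ≤ 1 / ε then 1
        else if ε ^ 2 ≤ ‖x‖ ∧ ‖x‖ ≤ ε then Real.log (‖x‖ / ε ^ 2) / Real.log (1 / ε)
        else if 1 / ε ≤ ‖x‖ ∧ ‖x‖ ≤ 1 / ε ^ 2 then
          Real.log (ε * ‖x‖) / Real.log (1 / ε)
        else 0)
    (uε : ℝ → EuclideanSpace ℝ (Fin N) → ℝ)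
    (huε : ∀ ε : ℝ, ∀ x : EuclideanSpace ℝ (Fin N),
      uε ε x = ‖x‖ ^ (-((N : ℝ) - 2 * b - 2) / 2) * φ ε x) :
    (∃ C > (0 : ℝ), ∀ ε ∈ Set.Ioo (0 : ℝ) 1,
      ∫ x : EuclideanSpace ℝ (Fin N),
          (fderiv ℝ (φ ε) x (‖x‖⁻¹ • x)) ^ 2 * ‖x‖ ^ ((2 : ℝ) - N)
        ≤ C * (Real.log (1 / ε))⁻¹)
    ∧ (∃ c > (0 : ℝ), ∀ ε ∈ Set.Ioo (0 : ℝ) 1,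
      c * Real.log (1 / ε)
        ≤ ∫ x : EuclideanSpace ℝ (Fin N), (uε ε x) ^ 2 / ‖x‖ ^ (2 * (b + 1)))
    ∧ Tendsto (fun ε : ℝ =>
        (∫ x : EuclideanSpace ℝ (Fin N),
            (fderiv ℝ (uε ε) x x) ^ 2 / ‖x‖ ^ (2 * b + 2)) /
          ∫ x : EuclideanSpace ℝ (Fin N), (uε ε x) ^ 2 / ‖x‖ ^ (2 * b + 2))
        (𝓝[>] 0) (𝓝 (((N : ℝ) - 2 * (b + 1)) ^ 2 / 4)) := by
  set S : ℝ := N * (volume (Metric.ball (0:EuclideanSpace ℝ (Fin N)) 1)).toReal with hSdef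
  have hS : 0 < S := by
    rw [hSdef]
    refine mul_pos (by exact_mod_cast hN) (ENNReal.toReal_pos ?_ ?_)
    · exact (Metric.measure_ball_pos volume _ one_pos).ne'
    · exact measure_ball_lt_top.ne
  set p : ℝ := -((N : ℝ) - 2 * b - 2) / 2 with hpdef
  refine ⟨⟨2 * S, by linarith, fun ε hε => ?_⟩, ⟨8/3 * S, by linarith, fun ε hε => ?_⟩, ?_⟩
  · rw [integral1_eq N hN φ hφ hε]
    have hL : 0 < Real.log (1/ε) := (eps_facts hε).2.2.2.2
    rw [div_eq_mul_inv]
    apply le_of_eq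
    ring
  · rw [integral2_eq N hN b φ hφ uε huε hε]
    apply le_of_eq
    ring
  · -- the limit
    have hLtop : Tendsto (fun ε : ℝ => Real.log (1/ε)) (𝓝[>] (0:ℝ)) atTop := by
      refine Tendsto.congr (fun ε => ?_)
        (tendsto_neg_atBot_atTop.comp Real.tendsto_log_nhdsGT_zero)
      simp [one_div, Real.log_inv]
    set T : ℝ → ℝ := fun l => (8/3*p^2*l + 2/l + 2*p)/(8/3*l) with hTdef
    have hT : Tendsto T atTop (𝓝 (p^2)) := by
      have h1 : Tendsto (fun l : ℝ => p^2 + (3/4)/l^2 + (3*p)/(4*l)) atTop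
          (𝓝 (p^2 + 0 + 0)) := by
        refine (tendsto_const_nhds.add ?_).add ?_
        · exact Tendsto.div_atTop tendsto_const_nhds (tendsto_pow_atTop two_ne_zero)
        · exact Tendsto.div_atTop tendsto_const_nhds (tendsto_id.const_mul_atTop four_pos)
      rw [show p^2 + 0 + 0 = p^2 by ring] at h1
      refine Tendsto.congr' ?_ h1
      filter_upwards [eventually_gt_atTop (0:ℝ)] with l hl
      rw [hTdef]
      field_simp
      ring
    have hcomp : Tendsto (fun ε : ℝ => T (Real.log (1/ε))) (𝓝[>] (0:ℝ)) (𝓝 (p^2)) :=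
      hT.comp hLtop
    have hfinal : (((N : ℝ) - 2 * (b + 1)) ^ 2 / 4) = p^2 := by
      rw [hpdef]; ring
    rw [hfinal]
    refine Tendsto.congr' ?_ hcomp
    filter_upwards [Ioo_mem_nhdsGT_of_mem (Set.mem_Ico.2 ⟨le_refl (0:ℝ), zero_lt_one⟩)]
      with ε hε
    have hL : 0 < Real.log (1/ε) := (eps_facts hε).2.2.2.2
    have hden : ∫ x : EuclideanSpace ℝ (Fin N), (uε ε x) ^ 2 / ‖x‖ ^ (2 * b + 2)
        = S * (8/3 * Real.log (1/ε)) := by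
      rw [show (2*b+2 : ℝ) = 2*(b+1) by ring]
      exact integral2_eq N hN b φ hφ uε huε hε
    have hnum : ∫ x : EuclideanSpace ℝ (Fin N), (fderiv ℝ (uε ε) x x) ^ 2 / ‖x‖ ^ (2 * b + 2)
        = S * (8/3 * p^2 * Real.log (1/ε) + 2 / Real.log (1/ε) + 2 * p) := by
      rw [integral3_eq N hN b φ hφ uε huε hε, hpdef]
    rw [hTdef, hnum, hden, mul_div_mul_left _ _ hS.ne']
end
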